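/- Let D be a 3-dicritical digraph. If D is not a bidirected odd cycle, then the digon graph B(D) contains no cycle, i.e., B(D) is a forest. -/

import Mathlib

/-!
Basic theory of finite digraphs: a digraph has a finite vertex set and a
finite set of arcs (ordered pairs of distinct vertices).
-/

/-- A finite digraph on a vertex type `V`: a finite vertex set together with a
finite set of arcs, each arc being an ordered pair of distinct vertices. -/
structure Digraph' (V : Type*) where
  verts : Finset V
  arcs : Finset (V × V)
  wf : ∀ a ∈ arcs, a.1 ∈ verts ∧ a.2 ∈ verts ∧ a.1 ≠ a.2

namespace Digraph'

variable {V : Type*} [DecidableEq V]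

/-- The number of vertices of a digraph. -/
def n (D : Digraph' V) : ℕ := D.verts.card

/-- The number of arcs of a digraph. -/
def m (D : Digraph' V) : ℕ := D.arcs.card

/-- The set of consecutive (cyclically) pairs of a list, i.e. the arcs of the
directed cycle running through the list. -/
def cyclicArcs (c : List V) : Finset (V × V) := (c.zip (c.rotate 1)).toFinset

/-- The set of consecutive pairs of a list, i.e. the arcs of the directed path
running through the list. -/
def pathArcs (p : List V) : Finset (V × V) := (p.zip p.tail).toFinset

/-- The symmetric closure of a set of arcs. -/
def symArcs (s : Finset (V × V)) : Finset (V × V) := s ∪ s.image Prod.swap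

/-- The arcs of the bidirected path running through a list (each consecutive
pair is joined by a digon). -/
def pathDigonArcs (p : List V) : Finset (V × V) := symArcs (pathArcs p)

/-- `p` is the list of vertices of a path of odd length (an odd number of edges,
equivalently an even number of vertices) from `a` to `b`. -/
def IsOddBidirPathList (p : List V) (a b : V) : Prop :=
  p.Nodup ∧ Even p.length ∧ p.head? = some a ∧ p.getLast? = some b

/-- The subdigraph induced by `S` contains no directed cycle.  A directed cycle
is given by a nonempty list of at least two distinct vertices, each one having an
arc towards the (cyclically) next one. -/
def AcyclicOn (D : Digraph' V) (S : Finset V) : Prop :=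
  ¬ ∃ c : List V, c.Nodup ∧ 2 ≤ c.length ∧ (∀ v ∈ c, v ∈ S) ∧ cyclicArcs c ⊆ D.arcs

/-- `φ` is a `k`-dicolouring of `D`: every colour class induces an acyclic
subdigraph. -/
def IsDicolouring (D : Digraph' V) (k : ℕ) (φ : V → Fin k) : Prop :=
  ∀ i : Fin k, D.AcyclicOn (D.verts.filter fun v => φ v = i)

/-- `D` admits a `k`-dicolouring. -/
def Dicolourable (D : Digraph' V) (k : ℕ) : Prop :=
  ∃ φ : V → Fin k, D.IsDicolouring k φ

/-- The dichromatic number of `D`: the least `k` such that `D` is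
`k`-dicolourable. -/
noncomputable def dichromatic (D : Digraph' V) : ℕ := sInf {k | D.Dicolourable k}

/-- `H` is a subdigraph of `D`. -/
def IsSubdigraph (H D : Digraph' V) : Prop := H.verts ⊆ D.verts ∧ H.arcs ⊆ D.arcs

/-- `H` is a proper subdigraph of `D`. -/
def IsProperSubdigraph (H D : Digraph' V) : Prop :=
  H.IsSubdigraph D ∧ (H.verts ≠ D.verts ∨ H.arcs ≠ D.arcs)

/-- `D` is `k`-dicritical: its dichromatic number is `k` and every proper
subdigraph has dichromatic number at most `k - 1`. -/
def Dicritical (k : ℕ) (D : Digraph' V) : Prop :=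
  D.dichromatic = k ∧
    ∀ H : Digraph' V, H.IsProperSubdigraph D → H.dichromatic ≤ k - 1

/-- `D` is an oriented graph: it has no digon. -/
def Oriented (D : Digraph' V) : Prop := ∀ a ∈ D.arcs, (a.2, a.1) ∉ D.arcs

/-- There is a digon between `u` and `v` in `D`. -/
def HasDigon (D : Digraph' V) (u v : V) : Prop :=
  (u, v) ∈ D.arcs ∧ (v, u) ∈ D.arcs

/-- `u` and `v` are neighbours: there is at least one arc between them. -/
def UAdj (D : Digraph' V) (u v : V) : Prop :=
  (u, v) ∈ D.arcs ∨ (v, u) ∈ D.arcs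

/-- `M` is a matching of digons of `D` (a matching of the digon graph `B(D)`):
a set of digons of `D`, pairwise sharing no end-vertex. -/
def IsDigonMatching (D : Digraph' V) (M : Finset (V × V)) : Prop :=
  (∀ p ∈ M, D.HasDigon p.1 p.2) ∧
    ∀ p ∈ M, ∀ q ∈ M, p ≠ q → p.1 ≠ q.1 ∧ p.1 ≠ q.2 ∧ p.2 ≠ q.1 ∧ p.2 ≠ q.2

/-- `π(D)`: the maximum size of a matching of the digon graph `B(D)`. -/
noncomputable def piNum (D : Digraph' V) : ℕ :=
  sSup {k | ∃ M : Finset (V × V), D.IsDigonMatching M ∧ M.card = k}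

/-- The potential `ρ(D) = 7 n(D) - 3 m(D) - 2 π(D)`. -/
noncomputable def potential (D : Digraph' V) : ℤ :=
  7 * (D.n : ℤ) - 3 * (D.m : ℤ) - 2 * (D.piNum : ℤ)

/-- The subdigraph of `D` induced by `R`. -/
def induce (D : Digraph' V) (R : Finset V) : Digraph' V where
  verts := D.verts ∩ R
  arcs := D.arcs.filter fun a => a.1 ∈ R ∧ a.2 ∈ R
  wf := by
    intro a ha
    rw [Finset.mem_filter] at ha
    obtain ⟨h, h1, h2⟩ := ha
    obtain ⟨hv1, hv2, hne⟩ := D.wf a h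
    exact ⟨Finset.mem_inter.mpr ⟨hv1, h1⟩, Finset.mem_inter.mpr ⟨hv2, h2⟩, hne⟩

/-- The potential `ρ_D(R)` of a set of vertices `R` in `D`: the potential of the
subdigraph of `D` induced by `R`. -/
noncomputable def potentialOn (D : Digraph' V) (R : Finset V) : ℤ :=
  (D.induce R).potential

/-- The digraph obtained from `D` by deleting the arc `a`. -/
def eraseArc (D : Digraph' V) (a : V × V) : Digraph' V where
  verts := D.verts
  arcs := D.arcs.erase a
  wf := fun b hb => D.wf b (Finset.mem_of_mem_erase hb)

/-- The digraph obtained from `D` by deleting the vertex `v`. -/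
def delVert (D : Digraph' V) (v : V) : Digraph' V where
  verts := D.verts.erase v
  arcs := D.arcs.filter fun a => a.1 ≠ v ∧ a.2 ≠ v
  wf := by
    intro a ha
    rw [Finset.mem_filter] at ha
    obtain ⟨h, h1, h2⟩ := ha
    obtain ⟨hv1, hv2, hne⟩ := D.wf a h
    exact ⟨Finset.mem_erase.mpr ⟨h1, hv1⟩, Finset.mem_erase.mpr ⟨h2, hv2⟩, hne⟩

/-- The degree of `v` in `D`: the number of arcs incident to `v`. -/
def degree (D : Digraph' V) (v : V) : ℕ :=
  (D.arcs.filter fun a => a.1 = v ∨ a.2 = v).card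

/-- `D` is a bidirected odd cycle: obtained from an undirected cycle of odd
length (at least 3) by replacing every edge by a digon. -/
def IsBidirectedOddCycle (D : Digraph' V) : Prop :=
  ∃ c : List V, c.Nodup ∧ 3 ≤ c.length ∧ Odd c.length ∧
    D.verts = c.toFinset ∧ D.arcs = symArcs (cyclicArcs c)

/-- `H` is a bidirected odd cycle with one arc removed. -/
def IsBidirOddCycleMinusArc (H : Digraph' V) : Prop :=
  ∃ (C : Digraph' V) (e : V × V), C.IsBidirectedOddCycle ∧ e ∈ C.arcs ∧
    H.verts = C.verts ∧ H.arcs = C.arcs.erase e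

/-- `D` is an odd 3-wheel with center `c`: a vertex `c` joined to a directed
3-cycle `(x, y, z, x)` by three bidirected paths of odd length, pairwise
disjoint except in `c`. -/
def IsOdd3WheelWithCenter (D : Digraph' V) (c : V) : Prop :=
  ∃ (p₁ p₂ p₃ : List V) (x y z : V),
    IsOddBidirPathList p₁ c x ∧ IsOddBidirPathList p₂ c y ∧ IsOddBidirPathList p₃ c z ∧
    p₁.toFinset ∩ p₂.toFinset = {c} ∧ p₁.toFinset ∩ p₃.toFinset = {c} ∧
    p₂.toFinset ∩ p₃.toFinset = {c} ∧
    D.verts = p₁.toFinset ∪ p₂.toFinset ∪ p₃.toFinset ∧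
    D.arcs = pathDigonArcs p₁ ∪ pathDigonArcs p₂ ∪ pathDigonArcs p₃ ∪
      {(x, y), (y, z), (z, x)}

/-- `D` is an odd 3-wheel. -/
def IsOdd3Wheel (D : Digraph' V) : Prop := ∃ c : V, D.IsOdd3WheelWithCenter c

end Digraph'

/-- The digon graph `B(D)`: the undirected graph on the vertices of `D` whose
edges are the pairs of vertices joined by a digon in `D`. -/
def Digraph'.digonGraph {V : Type*} [DecidableEq V] (D : Digraph' V) : SimpleGraph V where
  Adj u v := D.HasDigon u v
  symm := ⟨fun u v h => ⟨h.2, h.1⟩⟩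
  loopless := ⟨fun u h => (D.wf _ h.1).2.2 rfl⟩

section AuxLemmas

open SimpleGraph Digraph'

variable {V : Type*} [DecidableEq V]

private lemma getVert_eq_support_get' {G : SimpleGraph V} {u w : V}
    (p : G.Walk u w) (i : ℕ) (h : i < p.support.length) :
    p.support.get ⟨i, h⟩ = p.getVert i := by
  induction p generalizing i with
  | nil =>
    simp only [SimpleGraph.Walk.support_nil, List.length_singleton] at h
    interval_cases i
    rfl
  | cons hadj q ih =>
    cases i with
    | zero => rfl
    | succ n =>
      simp only [SimpleGraph.Walk.support_cons, List.get_cons_succ]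
      simp only [SimpleGraph.Walk.support_cons, List.length_cons] at h
      exact ih n (by omega)

private lemma cycle_list' {G : SimpleGraph V} {v : V} (p : G.Walk v v) (hp : p.IsCycle) :
    ∃ c : List V, c.Nodup ∧ c.length = p.length ∧
      (∀ i (h : i < c.length),
        G.Adj (c.get ⟨i, h⟩)
          (c.get ⟨(i+1) % c.length, Nat.mod_lt _ (Nat.lt_of_le_of_lt (Nat.zero_le _) h)⟩)) := by
  classical
  have h3 : 3 ≤ p.length := hp.three_le_length
  have hlen : p.support.length = p.length + 1 := SimpleGraph.Walk.length_support p
  have htail : p.support.tail.Nodup := hp.support_nodup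
  have htlen : p.support.tail.length = p.length := by simp [hlen]
  have hget : ∀ (j : ℕ) (h : j < p.length),
      p.support.tail.get ⟨j, by omega⟩ = p.getVert (j+1) := by
    intro j hj
    rw [List.get_tail _ _ _ (by omega), getVert_eq_support_get']
  have hinj : ∀ i j : ℕ, i < p.length → j < p.length → p.getVert i = p.getVert j → i = j := by
    intro i j hi hj hij
    rcases Nat.eq_zero_or_pos i with rfl | hi0
    · rcases Nat.eq_zero_or_pos j with rfl | hj0
      · rfl
      · exfalso
        have h1 : p.getVert 0 = p.getVert p.length := by simp
        have h2 : p.support.tail.get ⟨j-1, by omega⟩ = p.support.tail.get ⟨p.length-1, by omega⟩ := by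
          rw [hget _ (by omega), hget _ (by omega)]
          rw [show j - 1 + 1 = j from by omega, show p.length - 1 + 1 = p.length from by omega]
          rw [← hij, h1]
        have := (List.Nodup.get_inj_iff htail).mp h2
        simp only [Fin.mk.injEq] at this
        omega
    · rcases Nat.eq_zero_or_pos j with rfl | hj0
      · exfalso
        have h1 : p.getVert 0 = p.getVert p.length := by simp
        have h2 : p.support.tail.get ⟨i-1, by omega⟩ = p.support.tail.get ⟨p.length-1, by omega⟩ := by
          rw [hget _ (by omega), hget _ (by omega)]
          rw [show i - 1 + 1 = i from by omega, show p.length - 1 + 1 = p.length from by omega]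
          rw [hij, h1]
        have := (List.Nodup.get_inj_iff htail).mp h2
        simp only [Fin.mk.injEq] at this
        omega
      · have h2 : p.support.tail.get ⟨i-1, by omega⟩ = p.support.tail.get ⟨j-1, by omega⟩ := by
          rw [hget _ (by omega), hget _ (by omega)]
          rw [show i - 1 + 1 = i from by omega, show j - 1 + 1 = j from by omega, hij]
        have := (List.Nodup.get_inj_iff htail).mp h2
        simp only [Fin.mk.injEq] at this
        omega
  refine ⟨List.ofFn (fun i : Fin p.length => p.getVert i), ?_, by simp, ?_⟩
  · rw [List.nodup_ofFn]
    intro i j hij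
    exact Fin.ext (hinj i j i.isLt j.isLt hij)
  · intro i h
    simp only [List.length_ofFn] at h ⊢
    rw [List.get_ofFn, List.get_ofFn]
    show G.Adj (p.getVert i) (p.getVert ((i+1) % p.length))
    rcases Nat.lt_or_ge (i+1) p.length with hlt | hge
    · rw [Nat.mod_eq_of_lt hlt]
      exact p.adj_getVert_succ h
    · have hip : i + 1 = p.length := by omega
      have h0 : (i+1) % p.length = 0 := by rw [hip, Nat.mod_self]
      rw [h0]
      have hadj := p.adj_getVert_succ h
      rw [hip] at hadj
      rw [(by simp : p.getVert p.length = v)] at hadj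
      rwa [(by simp : p.getVert 0 = v)]

/-- membership in `cyclicArcs` from an index -/
private lemma mem_cyclicArcs_of_index (c : List V) (i : ℕ) (h : i < c.length) :
    (c.get ⟨i, h⟩, c.get ⟨(i+1) % c.length, Nat.mod_lt _ (Nat.lt_of_le_of_lt (Nat.zero_le _) h)⟩)
      ∈ cyclicArcs c := by
  classical
  unfold cyclicArcs
  rw [List.mem_toFinset]
  have hzlen : (c.zip (c.rotate 1)).length = c.length := by
    simp [List.length_zip, List.length_rotate]
  have hi : i < (c.zip (c.rotate 1)).length := by omega
  have hmem := List.getElem_mem hi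
  have heq : (c.zip (c.rotate 1))[i] =
      (c.get ⟨i, h⟩, c.get ⟨(i+1) % c.length, Nat.mod_lt _ (Nat.lt_of_le_of_lt (Nat.zero_le _) h)⟩) := by
    rw [List.getElem_zip]
    simp only [List.get_eq_getElem]
    congr 1
    rw [List.getElem_rotate]
  rwa [heq] at hmem

/-- every element of `cyclicArcs c` comes from an index -/
private lemma index_of_mem_cyclicArcs {c : List V} {a : V × V} (ha : a ∈ cyclicArcs c) :
    ∃ i : ℕ, ∃ h : i < c.length,
      a = (c.get ⟨i, h⟩,
        c.get ⟨(i+1) % c.length, Nat.mod_lt _ (Nat.lt_of_le_of_lt (Nat.zero_le _) h)⟩) := by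
  classical
  unfold cyclicArcs at ha
  rw [List.mem_toFinset] at ha
  obtain ⟨n, hn⟩ := List.mem_iff_get.mp ha
  have hzlen : (c.zip (c.rotate 1)).length = c.length := by
    simp [List.length_zip, List.length_rotate]
  refine ⟨n, by omega, ?_⟩
  rw [← hn]
  have : n.1 < (c.zip (c.rotate 1)).length := n.isLt
  simp only [List.get_eq_getElem, List.getElem_zip]
  congr 1
  rw [List.getElem_rotate]

private lemma mem_of_mem_cyclicArcs {c : List V} {a : V × V} (ha : a ∈ cyclicArcs c) :
    a.1 ∈ c ∧ a.2 ∈ c := by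
  classical
  unfold cyclicArcs at ha
  rw [List.mem_toFinset] at ha
  obtain ⟨h1, h2⟩ := List.of_mem_zip (show (a.1, a.2) ∈ _ from by simpa using ha)
  exact ⟨h1, (List.mem_rotate).mp h2⟩

private lemma cyclicArcs_pair (x y : V) :
    cyclicArcs [x, y] = {(x, y), (y, x)} := by
  classical
  unfold cyclicArcs
  rw [show ([x, y].rotate 1) = [y, x] by
    rw [List.rotate_cons_succ, List.rotate_zero]; rfl]
  simp [List.zip, List.toFinset_cons]


private lemma get_idx_congr (c : List V) {i j : ℕ} (hi : i < c.length) (hj : j < c.length)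
    (h : i = j) : c.get ⟨i, hi⟩ = c.get ⟨j, hj⟩ := by subst h; rfl

private lemma zmod2_ne {a b : ZMod 2} (h : a ≠ b) : b = a + 1 := by
  revert h; revert a b; decide

/-- parity along a chain of properly-coloured cyclic edges -/
private lemma chain_parity (ψ : V → ZMod 2) (f : ℕ → V) (ℓ s : ℕ) (hs : s < ℓ)
    (h : ∀ i, s ≤ i → i < ℓ → ψ (f i) ≠ ψ (f ((i+1) % ℓ))) :
    ∀ k, s + k ≤ ℓ → ψ (f ((s+k) % ℓ)) = ψ (f s) + (k : ZMod 2) := by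
  intro k
  induction k with
  | zero =>
    intro _
    rw [Nat.add_zero, Nat.mod_eq_of_lt hs]
    simp
  | succ n ih =>
    intro hk
    have hn : s + n < ℓ := by omega
    have ihn := ih (by omega)
    rw [Nat.mod_eq_of_lt hn] at ihn
    have hh := zmod2_ne (h (s + n) (by omega) hn)
    rw [show s + (n+1) = (s + n) + 1 from by omega, hh, ihn]
    push_cast
    ring

/-- a set whose elements are pairwise equal induces an acyclic subdigraph -/
private lemma acyclicOn_subsingleton (D : Digraph' V) (S : Finset V)
    (hS : ∀ x ∈ S, ∀ y ∈ S, x = y) : D.AcyclicOn S := by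
  rintro ⟨c, hnd, hlen, hmem, -⟩
  have h0 : 0 < c.length := by omega
  have h1 : 1 < c.length := by omega
  have hx := hmem (c.get ⟨0, h0⟩) (List.get_mem _ _)
  have hy := hmem (c.get ⟨1, h1⟩) (List.get_mem _ _)
  have := hS _ hx _ hy
  have := (List.Nodup.get_inj_iff hnd).mp this
  simp at this

/-- every digraph is dicolourable with enough colours -/
private lemma dicolourable_succ_card (D : Digraph' V) :
    D.Dicolourable (D.verts.card + 1) := by
  classical
  refine ⟨fun v => if h : v ∈ D.verts then (D.verts.equivFin ⟨v, h⟩).castSucc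
    else Fin.last _, ?_⟩
  intro i
  apply acyclicOn_subsingleton
  intro x hx y hy
  simp only [Finset.mem_filter] at hx hy
  obtain ⟨hx1, hx2⟩ := hx
  obtain ⟨hy1, hy2⟩ := hy
  rw [dif_pos hx1] at hx2
  rw [dif_pos hy1] at hy2
  have : (D.verts.equivFin ⟨x, hx1⟩) = (D.verts.equivFin ⟨y, hy1⟩) := by
    apply Fin.castSucc_injective
    rw [hx2, hy2]
  have := D.verts.equivFin.injective this
  exact congrArg Subtype.val this

/-- monotonicity of dicolourability -/
private lemma dicolourable_mono {D : Digraph' V} {j k : ℕ} (h : D.Dicolourable j)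
    (hjk : j ≤ k) : D.Dicolourable k := by
  obtain ⟨φ, hφ⟩ := h
  refine ⟨fun v => Fin.castLE hjk (φ v), ?_⟩
  intro i
  rintro ⟨c, hnd, hlen, hmem, harcs⟩
  have h0 : 0 < c.length := by omega
  set v0 := c.get ⟨0, h0⟩ with hv0
  have hv0mem := hmem v0 (List.get_mem _ _)
  simp only [Finset.mem_filter] at hv0mem
  apply hφ (φ v0)
  refine ⟨c, hnd, hlen, ?_, harcs⟩
  intro v hv
  have hvmem := hmem v hv
  simp only [Finset.mem_filter] at hvmem ⊢
  refine ⟨hvmem.1, ?_⟩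
  have : Fin.castLE hjk (φ v) = Fin.castLE hjk (φ v0) := by
    rw [hvmem.2, hv0mem.2]
  exact (Fin.castLE_injective hjk) this

/-- from a bound on the dichromatic number, extract an actual dicolouring -/
private lemma dicolourable_of_dichromatic_le {D : Digraph' V} {k : ℕ}
    (h : D.dichromatic ≤ k) : D.Dicolourable k := by
  have hne : {n | D.Dicolourable n}.Nonempty := ⟨_, dicolourable_succ_card D⟩
  have hmem := Nat.sInf_mem hne
  exact dicolourable_mono hmem h

end AuxLemmas
open Digraph' in
/-- If `D` is a 3-dicritical digraph which is not a bidirected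
odd cycle, then the digon graph `B(D)` contains no cycle, i.e. it is a forest. -/
theorem digonGraph_isAcyclic {V : Type*} [DecidableEq V]
    (D : Digraph' V) (hcrit : Digraph'.Dicritical 3 D)
    (hnc : ¬ D.IsBidirectedOddCycle) :
    D.digonGraph.IsAcyclic := by
  classical
  intro v p hp
  obtain ⟨c, hnd, hclen, hadj⟩ := cycle_list' p hp
  set ℓ := c.length with hℓdef
  have h3 : 3 ≤ ℓ := by rw [hclen]; exact hp.three_le_length
  set g : ℕ → V := fun i => c.getD i v with hg
  have hgget : ∀ i (h : i < ℓ), g i = c.get ⟨i, h⟩ := by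
    intro i h
    simp only [hg, List.getD_eq_getElem _ _ h, List.get_eq_getElem]
  have hmod : ∀ i, i < ℓ → (i+1) % ℓ < ℓ := fun i h => Nat.mod_lt _ (by omega)
  have hdigon : ∀ i, ∀ h : i < ℓ, D.HasDigon (g i) (g ((i+1) % ℓ)) := by
    intro i h
    rw [hgget i h, hgget _ (hmod i h)]
    exact hadj i h
  have hgmem : ∀ i, i < ℓ → g i ∈ c := by
    intro i h; rw [hgget i h]; exact List.get_mem _ _
  have hginj : ∀ i j, i < ℓ → j < ℓ → g i = g j → i = j := by
    intro i j hi hj hij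
    rw [hgget i hi, hgget j hj] at hij
    have := (List.Nodup.get_inj_iff hnd).mp hij
    simpa using this
  have hvsub : c.toFinset ⊆ D.verts := by
    intro x hx
    rw [List.mem_toFinset] at hx
    obtain ⟨n, hn⟩ := List.mem_iff_get.mp hx
    have hmem := (D.wf _ (hdigon n.1 n.isLt).1).1
    rwa [hgget n.1 n.isLt, hn] at hmem
  have hne : ∀ i, ∀ _ : i < ℓ, g i ≠ g ((i+1) % ℓ) := fun i h =>
    (D.wf _ (hdigon i h).1).2.2
  have harcssub : symArcs (cyclicArcs c) ⊆ D.arcs := by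
    intro a ha
    rw [symArcs, Finset.mem_union] at ha
    rcases ha with ha | ha
    · obtain ⟨i, hi, rfl⟩ := index_of_mem_cyclicArcs ha
      have := (hdigon i hi).1
      rwa [hgget i hi, hgget _ (hmod i hi)] at this
    · rw [Finset.mem_image] at ha
      obtain ⟨b, hb, rfl⟩ := ha
      obtain ⟨i, hi, rfl⟩ := index_of_mem_cyclicArcs hb
      have := (hdigon i hi).2
      rwa [hgget i hi, hgget _ (hmod i hi)] at this
  have hD2 : ¬ D.Dicolourable 2 := by
    intro h2
    have hle : D.dichromatic ≤ 2 := Nat.sInf_le h2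
    rw [hcrit.1] at hle
    omega
  -- Step 1: ℓ is odd
  have hOdd : Odd ℓ := by
    have h01 : (0+1) % ℓ = 1 := Nat.mod_eq_of_lt (by omega)
    have hd0 := hdigon 0 (by omega)
    rw [h01] at hd0
    set D' := D.eraseArc (g 0, g 1) with hD'
    have hproper : D'.IsProperSubdigraph D := by
      refine ⟨⟨subset_rfl, Finset.erase_subset _ _⟩, Or.inr ?_⟩
      intro hEq
      have hin := hd0.1
      rw [← hEq] at hin
      exact (Finset.notMem_erase _ _) hin
    obtain ⟨φ, hφ⟩ : D'.Dicolourable 2 :=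
      dicolourable_of_dichromatic_le (hcrit.2 D' hproper)
    have hmono : ∀ x y : V, (x, y) ∈ D'.arcs → (y, x) ∈ D'.arcs → φ x ≠ φ y := by
      intro x y hxy hyx hcon
      have hxD : x ∈ D.verts := (D.wf _ (Finset.mem_of_mem_erase hxy)).1
      have hyD : y ∈ D.verts := (D.wf _ (Finset.mem_of_mem_erase hxy)).2.1
      have hxyne : x ≠ y := (D.wf _ (Finset.mem_of_mem_erase hxy)).2.2
      apply hφ (φ x)
      refine ⟨[x, y], by simp [hxyne], by simp, ?_, ?_⟩
      · intro z hz
        rcases (by simpa using hz : z = x ∨ z = y) with rfl | rfl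
        · exact Finset.mem_filter.mpr ⟨hxD, rfl⟩
        · exact Finset.mem_filter.mpr ⟨hyD, hcon.symm⟩
      · rw [cyclicArcs_pair]
        intro a ha
        rcases (by simpa using ha : a = (x, y) ∨ a = (y, x)) with rfl | rfl
        · exact hxy
        · exact hyx
    have heq : φ (g 0) = φ (g 1) := by
      by_contra hneq
      apply hD2
      refine ⟨φ, ?_⟩
      intro i
      rintro ⟨cc, hnd', hlen', hmem', harcs'⟩
      by_cases hc : (g 0, g 1) ∈ cyclicArcs cc
      · obtain ⟨hu', hw'⟩ := mem_of_mem_cyclicArcs hc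
        have h1 := hmem' _ hu'
        have h2 := hmem' _ hw'
        simp only [Finset.mem_filter] at h1 h2
        exact hneq (h1.2.trans h2.2.symm)
      · apply hφ i
        refine ⟨cc, hnd', hlen', hmem', ?_⟩
        intro a ha
        exact Finset.mem_erase.mpr ⟨fun hEq => hc (hEq ▸ ha), harcs' ha⟩
    have hstep : ∀ i, 1 ≤ i → i < ℓ → φ (g i) ≠ φ (g ((i+1) % ℓ)) := by
      intro i h1 hiℓ hcon
      have hd := hdigon i hiℓ
      have hxyne1 : (g i, g ((i+1) % ℓ)) ≠ (g 0, g 1) := by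
        intro hEq
        have := hginj i 0 hiℓ (by omega) (congrArg Prod.fst hEq)
        omega
      have hxyne2 : (g ((i+1) % ℓ), g i) ≠ (g 0, g 1) := by
        intro hEq
        have e1 : (i+1) % ℓ = 0 := hginj _ 0 (hmod i hiℓ) (by omega) (congrArg Prod.fst hEq)
        have e2 : i = 1 := hginj i 1 hiℓ (by omega) (congrArg Prod.snd hEq)
        rw [e2] at e1
        rcases Nat.dvd_of_mod_eq_zero e1 with ⟨t, ht⟩
        rcases Nat.lt_or_ge t 1 with h' | h' <;> nlinarith
      exact hmono _ _ (Finset.mem_erase.mpr ⟨hxyne1, hd.1⟩)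
        (Finset.mem_erase.mpr ⟨hxyne2, hd.2⟩) hcon
    have hpar := chain_parity (fun x => (φ x : ZMod 2)) g ℓ 1 (by omega)
      (fun i h1 h2 => hstep i h1 h2) (ℓ - 1) (by omega)
    rw [show 1 + (ℓ - 1) = ℓ from by omega, Nat.mod_self] at hpar
    have hz : (((ℓ - 1 : ℕ)) : ZMod 2) = 0 := by
      beta_reduce at hpar
      rw [heq] at hpar
      exact left_eq_add.mp hpar
    rcases (ZMod.natCast_eq_zero_iff _ 2).mp hz with ⟨t, ht⟩
    exact ⟨t, by omega⟩
  -- Step 2: D is a bidirected odd cycle, contradiction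
  have hwf : ∀ a ∈ symArcs (cyclicArcs c),
      a.1 ∈ c.toFinset ∧ a.2 ∈ c.toFinset ∧ a.1 ≠ a.2 := by
    intro a ha
    have haD := harcssub ha
    rw [symArcs, Finset.mem_union] at ha
    refine ⟨List.mem_toFinset.mpr ?_, List.mem_toFinset.mpr ?_, (D.wf a haD).2.2⟩
    · rcases ha with ha | ha
      · exact (mem_of_mem_cyclicArcs ha).1
      · rw [Finset.mem_image] at ha
        obtain ⟨b, hb, rfl⟩ := ha
        exact (mem_of_mem_cyclicArcs hb).2
    · rcases ha with ha | ha
      · exact (mem_of_mem_cyclicArcs ha).2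
      · rw [Finset.mem_image] at ha
        obtain ⟨b, hb, rfl⟩ := ha
        exact (mem_of_mem_cyclicArcs hb).1
  set C : Digraph' V := ⟨c.toFinset, symArcs (cyclicArcs c), hwf⟩ with hCdef
  have hC2 : ¬ C.Dicolourable 2 := by
    rintro ⟨ψ, hψ⟩
    have hex : ∃ i, i < ℓ ∧ ψ (g i) = ψ (g ((i+1) % ℓ)) := by
      by_contra hno
      push_neg at hno
      have hpar := chain_parity (fun x => (ψ x : ZMod 2)) g ℓ 0 (by omega)
        (fun i _ h2 => hno i h2) ℓ (by omega)
      rw [Nat.zero_add, Nat.mod_self] at hpar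
      beta_reduce at hpar
      have hz : ((ℓ : ℕ) : ZMod 2) = 0 := left_eq_add.mp hpar
      rcases (ZMod.natCast_eq_zero_iff _ 2).mp hz with ⟨t, ht⟩
      rcases hOdd with ⟨m, hm⟩
      omega
    obtain ⟨i, hiℓ, hsame⟩ := hex
    have hxyne := hne i hiℓ
    apply hψ (ψ (g i))
    refine ⟨[g i, g ((i+1) % ℓ)], by simp [hxyne], by simp, ?_, ?_⟩
    · intro z hz
      rcases (by simpa using hz : z = g i ∨ z = g ((i+1) % ℓ)) with rfl | rfl
      · exact Finset.mem_filter.mpr ⟨List.mem_toFinset.mpr (hgmem i hiℓ), rfl⟩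
      · exact Finset.mem_filter.mpr
          ⟨List.mem_toFinset.mpr (hgmem _ (hmod i hiℓ)), hsame.symm⟩
    · rw [cyclicArcs_pair]
      intro a ha
      rcases (by simpa using ha :
          a = (g i, g ((i+1) % ℓ)) ∨ a = (g ((i+1) % ℓ), g i)) with rfl | rfl
      · apply Finset.mem_union_left
        rw [hgget i hiℓ, hgget _ (hmod i hiℓ)]
        exact mem_cyclicArcs_of_index c i hiℓ
      · apply Finset.mem_union_right
        rw [Finset.mem_image]
        refine ⟨(g i, g ((i+1) % ℓ)), ?_, rfl⟩
        rw [hgget i hiℓ, hgget _ (hmod i hiℓ)]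
        exact mem_cyclicArcs_of_index c i hiℓ
  have hsub : C.IsSubdigraph D := ⟨hvsub, harcssub⟩
  have hnp : ¬ C.IsProperSubdigraph D := by
    intro hpp
    exact hC2 (dicolourable_of_dichromatic_le (hcrit.2 C hpp))
  have heqs : C.verts = D.verts ∧ C.arcs = D.arcs := by
    by_contra hcon
    apply hnp
    refine ⟨hsub, ?_⟩
    tauto
  exact hnc ⟨c, hnd, h3, hOdd, heqs.1.symm, heqs.2.symm⟩
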